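/- Let R be a strongly G-graded unital ring. Then R is G-controlled if and only if every R_g is a simple R_e-bimodule and C_R(R_e) = Z(R_e). -/

import Mathlib

open DirectSum Pointwise

namespace Controlled

variable {G R : Type*} [AddGroup G] [DecidableEq G] [Ring R]

/-- `P` is an `R_e`-sub-bimodule of `R` (w.r.t. the grading `𝒜`, written additively,
so `R_e = 𝒜 0`). -/
def IsSubBimodule (𝒜 : G → AddSubgroup R) (P : AddSubgroup R) : Prop :=
  ∀ a ∈ 𝒜 0, ∀ x ∈ P, a * x ∈ P ∧ x * a ∈ P

/-- The `R_e`-bimodule `R_H = ⊕_{h ∈ H} R_h` (internally, the subgroup generated by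
the `R_h`, `h ∈ H`; the sum is automatically direct). `R_∅ = ⊥ = {0}`. -/
def RH (𝒜 : G → AddSubgroup R) (H : Set G) : AddSubgroup R := ⨆ h ∈ H, 𝒜 h

/-- An `R_e`-bimodule isomorphism between additive subgroups `P` and `Q` of `R`:
an additive equivalence compatible with left and right multiplication by `R_e = 𝒜 0`. -/
structure BimodIso (𝒜 : G → AddSubgroup R) (P Q : AddSubgroup R) where
  toEquiv : P ≃+ Q
  map_left : ∀ (a x : R), a ∈ 𝒜 0 → ∀ (hx : x ∈ P) (hax : a * x ∈ P),
    (toEquiv ⟨a * x, hax⟩ : R) = a * (toEquiv ⟨x, hx⟩ : R)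
  map_right : ∀ (a x : R), a ∈ 𝒜 0 → ∀ (hx : x ∈ P) (hxa : x * a ∈ P),
    (toEquiv ⟨x * a, hxa⟩ : R) = (toEquiv ⟨x, hx⟩ : R) * a

/-- `R` is `G`-controlled: `H ↦ R_H` is a bijection from subsets of `G` onto the
`R_e`-sub-bimodules of `R`, and `R_S ≅ R_T` (as `R_e`-bimodules) iff `S = T`. -/
def IsControlled (𝒜 : G → AddSubgroup R) : Prop :=
  (∀ H : Set G, IsSubBimodule 𝒜 (RH 𝒜 H)) ∧
  Function.Injective (RH 𝒜) ∧
  (∀ P : AddSubgroup R, IsSubBimodule 𝒜 P → ∃ H : Set G, RH 𝒜 H = P) ∧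
  (∀ S T : Set G, Nonempty (BimodIso 𝒜 (RH 𝒜 S) (RH 𝒜 T)) ↔ S = T)

/-- `P` is a (nonzero) simple `R_e`-bimodule contained in `R`. -/
def IsSimpleBimod (𝒜 : G → AddSubgroup R) (P : AddSubgroup R) : Prop :=
  P ≠ ⊥ ∧ ∀ Q : AddSubgroup R, Q ≤ P → IsSubBimodule 𝒜 Q → Q = ⊥ ∨ Q = P

/-- The product `AB` of two additive subgroups of `R`: all finite sums of products. -/
def mulSub (A B : AddSubgroup R) : AddSubgroup R :=
  AddSubgroup.closure ((A : Set R) * (B : Set R))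

/-- `R` is strongly graded: `R_g R_h = R_{g+h}` for all `g, h`. -/
def IsStronglyGraded (𝒜 : G → AddSubgroup R) : Prop :=
  ∀ g h : G, mulSub (𝒜 g) (𝒜 h) = 𝒜 (g + h)

/-- `C_R(R_e) = Z(R_e)` as subsets of `R`. -/
def CentralizerEqCenter (𝒜 : G → AddSubgroup R) : Prop :=
  {x : R | ∀ r ∈ 𝒜 0, x * r = r * x} = {x : R | x ∈ 𝒜 0 ∧ ∀ r ∈ 𝒜 0, x * r = r * x}

/-- A two-sided ideal `I` is graded if each homogeneous component of each of its
elements again lies in `I` (equivalently, `I = ⊕_g (I ∩ R_g)`). -/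
def IsGradedIdeal (𝒜 : G → AddSubgroup R) [GradedRing 𝒜] (I : TwoSidedIdeal R) : Prop :=
  ∀ x ∈ I, ∀ g : G, (DirectSum.decompose 𝒜 x g : R) ∈ I

/-- `R` is graded simple: the only graded two-sided ideals are `{0}` and `R`. -/
def IsGradedSimple (𝒜 : G → AddSubgroup R) [GradedRing 𝒜] : Prop :=
  ∀ I : TwoSidedIdeal R, IsGradedIdeal 𝒜 I → I = ⊥ ∨ I = ⊤

end Controlled

variable {G R : Type*} [AddGroup G] [DecidableEq G] [Ring R]



namespace Aux

variable {G R : Type*} [AddGroup G] [DecidableEq G] [Ring R]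
variable (𝒜 : G → AddSubgroup R) [GradedRing 𝒜]

/-- the `k`-th component map as an additive hom `R →+ R`. -/
noncomputable def cmp (k : G) : R →+ R :=
  AddMonoidHom.mk' (fun x => (decompose 𝒜 x k : R)) (by
    intro a b
    show (decompose 𝒜 (a+b) k : R) = _
    rw [decompose_add]
    rfl)

@[simp] lemma cmp_apply (k : G) (x : R) : cmp 𝒜 k x = (decompose 𝒜 x k : R) := rfl

lemma cmp_mem (k : G) (x : R) : cmp 𝒜 k x ∈ 𝒜 k := (decompose 𝒜 x k).2

lemma cmp_of_mem_same {k : G} {x : R} (hx : x ∈ 𝒜 k) : cmp 𝒜 k x = x :=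
  DirectSum.decompose_of_mem_same 𝒜 hx

lemma cmp_of_mem_ne {i k : G} {x : R} (hx : x ∈ 𝒜 i) (h : i ≠ k) : cmp 𝒜 k x = 0 :=
  DirectSum.decompose_of_mem_ne 𝒜 hx h

lemma degree_eq {g h : G} {x : R} (hg : x ∈ 𝒜 g) (hh : x ∈ 𝒜 h) (hx : x ≠ 0) : g = h := by
  by_contra hne
  have h1 := cmp_of_mem_ne 𝒜 hg hne
  rw [cmp_of_mem_same 𝒜 hh] at h1
  exact hx h1

lemma mem_zero_mul {a x : R} {k : G} (ha : a ∈ 𝒜 0) (hx : x ∈ 𝒜 k) : a * x ∈ 𝒜 k := by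
  simpa using SetLike.mul_mem_graded ha hx

lemma mem_mul_zero {a x : R} {k : G} (ha : a ∈ 𝒜 0) (hx : x ∈ 𝒜 k) : x * a ∈ 𝒜 k := by
  simpa using SetLike.mul_mem_graded hx ha

lemma cmp_mul_left {a : R} (ha : a ∈ 𝒜 0) (x : R) (k : G) :
    cmp 𝒜 k (a * x) = a * cmp 𝒜 k x := by
  induction x using DirectSum.Decomposition.inductionOn 𝒜 with
  | zero => simp
  | @homogeneous i m =>
    rcases eq_or_ne i k with rfl | hik
    · rw [cmp_of_mem_same 𝒜 m.2, cmp_of_mem_same 𝒜 (mem_zero_mul 𝒜 ha m.2)]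
    · rw [cmp_of_mem_ne 𝒜 m.2 hik, cmp_of_mem_ne 𝒜 (mem_zero_mul 𝒜 ha m.2) hik, mul_zero]
  | add x y hx hy => rw [mul_add, map_add, map_add, hx, hy, mul_add]

lemma cmp_mul_right {a : R} (ha : a ∈ 𝒜 0) (x : R) (k : G) :
    cmp 𝒜 k (x * a) = cmp 𝒜 k x * a := by
  induction x using DirectSum.Decomposition.inductionOn 𝒜 with
  | zero => simp
  | @homogeneous i m =>
    rcases eq_or_ne i k with rfl | hik
    · rw [cmp_of_mem_same 𝒜 m.2, cmp_of_mem_same 𝒜 (mem_mul_zero 𝒜 ha m.2)]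
    · rw [cmp_of_mem_ne 𝒜 m.2 hik, cmp_of_mem_ne 𝒜 (mem_mul_zero 𝒜 ha m.2) hik, zero_mul]
  | add x y hx hy => rw [add_mul, map_add, map_add, hx, hy, add_mul]

open scoped Classical in
lemma eq_sum_cmp (x : R) (F : Finset G) (hF : ∀ k ∉ F, cmp 𝒜 k x = 0) :
    x = ∑ k ∈ F, cmp 𝒜 k x := by
  classical
  have h0 := DirectSum.sum_support_decompose 𝒜 x
  have hsub : DFinsupp.support (decompose 𝒜 x) ⊆ F := by
    intro i hi
    by_contra hiF
    have := hF i hiF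
    simp only [cmp_apply] at this
    rw [DFinsupp.mem_support_iff] at hi
    exact hi (by ext1; simpa using this)
  calc x = ∑ i ∈ DFinsupp.support (decompose 𝒜 x), (decompose 𝒜 x i : R) := h0.symm
    _ = ∑ k ∈ F, cmp 𝒜 k x := by
        refine Finset.sum_subset hsub ?_
        intro i _ hi
        simp only [cmp_apply]
        rw [DFinsupp.notMem_support_iff] at hi
        simp [hi]

lemma eq_zero_of_cmp (x : R) (h : ∀ k, cmp 𝒜 k x = 0) : x = 0 := by
  classical
  have := eq_sum_cmp 𝒜 x ∅ (fun k _ => h k)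
  simpa using this

end Aux

namespace Aux
variable {G R : Type*} [AddGroup G] [DecidableEq G] [Ring R]
variable (𝒜 : G → AddSubgroup R) [GradedRing 𝒜]

set_option linter.unusedSectionVars false

lemma RH_empty : Controlled.RH 𝒜 (∅ : Set G) = ⊥ := by
  simp [Controlled.RH]

lemma RH_singleton (g : G) : Controlled.RH 𝒜 ({g} : Set G) = 𝒜 g := by
  simp [Controlled.RH]

lemma le_RH {H : Set G} {h : G} (hh : h ∈ H) : 𝒜 h ≤ Controlled.RH 𝒜 H :=
  le_iSup₂ (f := fun h _ => 𝒜 h) h hh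

lemma RH_le {H : Set G} {P : AddSubgroup R} (h : ∀ h ∈ H, 𝒜 h ≤ P) :
    Controlled.RH 𝒜 H ≤ P := iSup₂_le h

lemma cmp_eq_zero_of_RH {H : Set G} {x : R} (hx : x ∈ Controlled.RH 𝒜 H) {g : G}
    (hg : g ∉ H) : cmp 𝒜 g x = 0 := by
  set K : AddSubgroup R :=
    { carrier := {x | ∀ k ∉ H, cmp 𝒜 k x = 0}
      add_mem' := by intro a b ha hb k hk; rw [map_add, ha k hk, hb k hk, add_zero]
      zero_mem' := by intro k hk; simp
      neg_mem' := by intro a ha k hk; rw [map_neg, ha k hk, neg_zero] } with hK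
  have hle : Controlled.RH 𝒜 H ≤ K := by
    refine RH_le 𝒜 ?_
    intro h hh y hy
    intro k hk
    exact cmp_of_mem_ne 𝒜 hy (fun hhk => hk (hhk ▸ hh))
  exact hle hx g hg

lemma list_sum_map_neg {α : Type*} (l : List α) (f : α → R) :
    (l.map fun p => -(f p)).sum = -(l.map f).sum := by
  induction l with
  | nil => simp
  | cons a l ih => simp [ih, neg_add, add_comm]

/-- extract a list representation from membership in `mulSub A B`. -/
lemma exists_rep {A B : AddSubgroup R} {x : R} (hx : x ∈ Controlled.mulSub A B) :
    ∃ l : List (R × R), (∀ p ∈ l, p.1 ∈ A ∧ p.2 ∈ B) ∧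
      (l.map fun p => p.1 * p.2).sum = x := by
  induction hx using AddSubgroup.closure_induction with
  | mem z hz =>
    obtain ⟨a, ha, b, hb, rfl⟩ := hz
    refine ⟨[(a, b)], ?_, by simp⟩
    intro p hp
    simp only [List.mem_singleton] at hp
    subst hp
    exact ⟨ha, hb⟩
  | zero => exact ⟨[], by simp, by simp⟩
  | add x y hx hy ihx ihy =>
    obtain ⟨l1, h1, e1⟩ := ihx
    obtain ⟨l2, h2, e2⟩ := ihy
    refine ⟨l1 ++ l2, ?_, by simp [e1, e2]⟩
    intro p hp
    rcases List.mem_append.mp hp with h | h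
    exacts [h1 p h, h2 p h]
  | neg x hx ih =>
    obtain ⟨l, h1, e1⟩ := ih
    refine ⟨l.map fun p => (-p.1, p.2), ?_, ?_⟩
    · intro p hp
      simp only [List.mem_map] at hp
      obtain ⟨q, hq, rfl⟩ := hp
      exact ⟨neg_mem (h1 q hq).1, (h1 q hq).2⟩
    · rw [List.map_map]
      have : ((fun p : R × R => p.1 * p.2) ∘ fun p : R × R => (-p.1, p.2)) =
          fun p : R × R => -(p.1 * p.2) := by
        funext p; simp
      rw [this, ← e1]
      exact list_sum_map_neg l _

end Aux


namespace Aux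
variable {G R : Type*} [AddGroup G] [DecidableEq G] [Ring R]
variable (𝒜 : G → AddSubgroup R) [GradedRing 𝒜]

set_option linter.unusedSectionVars false

lemma one_mem_zero : (1 : R) ∈ 𝒜 0 := SetLike.one_mem_graded 𝒜

/-- KEY LEMMA: if `g ≠ h` and there is a nonzero `R_e`-bimodule map `𝒜 g → 𝒜 h`,
then the centralizer condition fails. -/
lemma key (hstrong : Controlled.IsStronglyGraded 𝒜)
    (hcent : Controlled.CentralizerEqCenter 𝒜)
    {g h : G} (hgh : g ≠ h) (f : R → R)
    (hmem : ∀ y ∈ 𝒜 g, f y ∈ 𝒜 h)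
    (hadd : ∀ y ∈ 𝒜 g, ∀ z ∈ 𝒜 g, f (y + z) = f y + f z)
    (hleft : ∀ a ∈ 𝒜 0, ∀ y ∈ 𝒜 g, f (a * y) = a * f y)
    (hright : ∀ a ∈ 𝒜 0, ∀ y ∈ 𝒜 g, f (y * a) = f y * a)
    (hfne : ∃ y ∈ 𝒜 g, f y ≠ 0) : False := by
  have f0 : f 0 = 0 := by
    have := hadd 0 (zero_mem _) 0 (zero_mem _)
    rw [add_zero] at this
    exact (left_eq_add.mp this)
  -- representations of 1
  have hone1 : (1 : R) ∈ Controlled.mulSub (𝒜 (-g)) (𝒜 g) := by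
    rw [hstrong (-g) g, neg_add_cancel]; exact one_mem_zero 𝒜
  have hone2 : (1 : R) ∈ Controlled.mulSub (𝒜 g) (𝒜 (-g)) := by
    rw [hstrong g (-g), add_neg_cancel]; exact one_mem_zero 𝒜
  obtain ⟨L1, hL1, hL1sum⟩ := exists_rep hone1
  obtain ⟨L2, hL2, hL2sum⟩ := exists_rep hone2
  -- the transported map Ψ : R_e → R_{-g+h}
  set Ψ : R → R := fun z => (L1.map fun p => p.1 * f (p.2 * z)).sum with hΨ
  -- membership helpers
  have hgz : ∀ d ∈ 𝒜 g, ∀ z ∈ 𝒜 0, d * z ∈ 𝒜 g := fun d hd z hz => mem_mul_zero 𝒜 hz hd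
  have hmul0 : ∀ a ∈ 𝒜 (-g), ∀ y ∈ 𝒜 g, a * y ∈ 𝒜 0 := by
    intro a ha y hy
    have := SetLike.mul_mem_graded ha hy
    rwa [neg_add_cancel] at this
  have hmul0' : ∀ d ∈ 𝒜 g, ∀ a ∈ 𝒜 (-g), d * a ∈ 𝒜 0 := by
    intro d hd a ha
    have := SetLike.mul_mem_graded hd ha
    rwa [add_neg_cancel] at this
  -- Ψ on single products
  have Ψ_single : ∀ a ∈ 𝒜 (-g), ∀ y ∈ 𝒜 g, Ψ (a * y) = a * f y := by
    intro a ha y hy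
    have : (L1.map fun p => p.1 * f (p.2 * (a * y))) =
        L1.map fun p => (p.1 * p.2) * (a * f y) := by
      refine List.map_congr_left ?_
      intro p hp
      obtain ⟨hp1, hp2⟩ := hL1 p hp
      have hpa : p.2 * a ∈ 𝒜 0 := hmul0' p.2 hp2 a ha
      rw [← mul_assoc p.2 a y, hleft _ hpa _ hy, ← mul_assoc, ← mul_assoc, mul_assoc (p.1 * p.2)]
    rw [hΨ]
    simp only [this]
    rw [List.sum_map_mul_right, hL1sum, one_mul]
  -- Ψ additive on 𝒜 0
  have Ψ_add : ∀ z1 ∈ 𝒜 0, ∀ z2 ∈ 𝒜 0, Ψ (z1 + z2) = Ψ z1 + Ψ z2 := by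
    intro z1 hz1 z2 hz2
    rw [hΨ]
    simp only
    rw [← List.sum_map_add]
    refine congrArg _ (List.map_congr_left ?_)
    intro p hp
    obtain ⟨hp1, hp2⟩ := hL1 p hp
    rw [mul_add, hadd _ (hgz p.2 hp2 z1 hz1) _ (hgz p.2 hp2 z2 hz2), mul_add]
  have Ψ_zero : Ψ 0 = 0 := by
    have := Ψ_add 0 (zero_mem _) 0 (zero_mem _)
    rw [add_zero] at this
    exact (left_eq_add.mp this)
  -- Ψ of list representations
  have Ψ_rep : ∀ M : List (R × R), (∀ p ∈ M, p.1 ∈ 𝒜 (-g) ∧ p.2 ∈ 𝒜 g) →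
      Ψ ((M.map fun p => p.1 * p.2).sum) = (M.map fun p => p.1 * f p.2).sum := by
    intro M
    induction M with
    | nil => intro _; simpa using Ψ_zero
    | cons q M ih =>
      intro hM
      have hq := hM q List.mem_cons_self
      have hM' : ∀ p ∈ M, p.1 ∈ 𝒜 (-g) ∧ p.2 ∈ 𝒜 g := fun p hp => hM p (List.mem_cons_of_mem q hp)
      have hsmem : (M.map fun p => p.1 * p.2).sum ∈ 𝒜 0 := by
        refine AddSubgroup.list_sum_mem _ ?_
        intro x hx
        simp only [List.mem_map] at hx
        obtain ⟨p, hp, rfl⟩ := hx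
        exact hmul0 p.1 (hM' p hp).1 p.2 (hM' p hp).2
      simp only [List.map_cons, List.sum_cons]
      rw [Ψ_add _ (hmul0 q.1 hq.1 q.2 hq.2) _ hsmem, Ψ_single _ hq.1 _ hq.2, ih hM']
  -- the element u
  set u : R := (L1.map fun p => p.1 * f p.2).sum with hu
  have hu_mem : u ∈ 𝒜 (-g + h) := by
    refine AddSubgroup.list_sum_mem _ ?_
    intro x hx
    simp only [List.mem_map] at hx
    obtain ⟨p, hp, rfl⟩ := hx
    exact SetLike.mul_mem_graded (hL1 p hp).1 (hmem _ (hL1 p hp).2)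
  -- u * e = Ψ e
  have hue : ∀ e ∈ 𝒜 0, u * e = Ψ e := by
    intro e he
    rw [hu, ← List.sum_map_mul_right, hΨ]
    refine congrArg _ (List.map_congr_left ?_)
    intro p hp
    rw [mul_assoc, hright _ he _ (hL1 p hp).2]
  -- e * u = Ψ e
  have heu : ∀ e ∈ 𝒜 0, e * u = Ψ e := by
    intro e he
    have hM : ∀ p ∈ L1.map fun p : R × R => (e * p.1, p.2), p.1 ∈ 𝒜 (-g) ∧ p.2 ∈ 𝒜 g := by
      intro p hp
      simp only [List.mem_map] at hp
      obtain ⟨q, hq, rfl⟩ := hp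
      have hq0 : e * q.1 ∈ 𝒜 (-g) := by
        have := SetLike.mul_mem_graded he (hL1 q hq).1
        rwa [zero_add] at this
      exact ⟨hq0, (hL1 q hq).2⟩
    have h1 := Ψ_rep _ hM
    rw [List.map_map, List.map_map] at h1
    have e1 : ((fun p : R × R => p.1 * p.2) ∘ fun p : R × R => (e * p.1, p.2)) =
        fun p : R × R => e * (p.1 * p.2) := by funext p; simp [mul_assoc]
    have e2 : ((fun p : R × R => p.1 * f p.2) ∘ fun p : R × R => (e * p.1, p.2)) =
        fun p : R × R => e * (p.1 * f p.2) := by funext p; simp [mul_assoc]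
    rw [e1, e2, List.sum_map_mul_left, List.sum_map_mul_left, hL1sum, mul_one] at h1
    rw [hu, ← h1]
  -- u is in the centralizer, hence in 𝒜 0
  have hu0 : u ∈ 𝒜 0 := by
    have hmem' : u ∈ {x : R | ∀ r ∈ 𝒜 0, x * r = r * x} := by
      show ∀ r ∈ 𝒜 0, u * r = r * u
      intro r hr
      rw [hue r hr, heu r hr]
    rw [hcent] at hmem'
    exact hmem'.1
  -- but u has degree -g + h ≠ 0, so u = 0
  have hs : -g + h ≠ 0 := by
    intro h0
    rw [neg_add_eq_zero] at h0
    exact hgh h0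
  have hu_zero : u = 0 := by
    by_contra hne
    exact hs (degree_eq 𝒜 hu_mem hu0 hne)
  -- then Ψ vanishes on 𝒜 0, so f = 0: contradiction
  have hΨ0 : ∀ e ∈ 𝒜 0, Ψ e = 0 := by
    intro e he
    rw [← hue e he, hu_zero, zero_mul]
  have hvanish : ∀ a ∈ 𝒜 (-g), ∀ y ∈ 𝒜 g, a * f y = 0 := by
    intro a ha y hy
    rw [← Ψ_single a ha y hy]
    exact hΨ0 _ (hmul0 a ha y hy)
  obtain ⟨y0, hy0, hfy0⟩ := hfne
  apply hfy0
  have : f y0 = (1 : R) * f y0 := (one_mul _).symm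
  rw [this, ← hL2sum, ← List.sum_map_mul_right]
  have : (L2.map fun p : R × R => p.1 * p.2 * f y0) = L2.map fun _ => (0 : R) := by
    refine List.map_congr_left ?_
    intro p hp
    rw [mul_assoc, hvanish p.2 (hL2 p hp).2 y0 hy0, mul_zero]
  rw [this]
  simp

end Aux


namespace Aux
variable {G R : Type*} [AddGroup G] [DecidableEq G] [Ring R]
variable (𝒜 : G → AddSubgroup R) [GradedRing 𝒜]

set_option linter.unusedSectionVars false

lemma bot_lt_graded (hc : Controlled.IsControlled 𝒜) (g : G) : 𝒜 g ≠ ⊥ := by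
  intro hbot
  have h1 : Controlled.RH 𝒜 ({g} : Set G) = Controlled.RH 𝒜 (∅ : Set G) := by
    rw [RH_singleton, RH_empty, hbot]
  exact (Set.singleton_ne_empty g) (hc.2.1 h1)

/-- in the controlled case, a nonzero sub-bimodule contained in `𝒜 g` is all of `𝒜 g`. -/
lemma sub_of_graded (hc : Controlled.IsControlled 𝒜) {g : G} {Q : AddSubgroup R}
    (hQle : Q ≤ 𝒜 g) (hQsub : Controlled.IsSubBimodule 𝒜 Q) (hQne : Q ≠ ⊥) : Q = 𝒜 g := by
  obtain ⟨H, hH⟩ := hc.2.2.1 Q hQsub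
  have hHne : H ≠ ∅ := by
    rintro rfl
    rw [RH_empty] at hH
    exact hQne hH.symm
  have hsub : H = {g} := by
    have : ∀ h ∈ H, h = g := by
      intro h hh
      have h1 : 𝒜 h ≤ 𝒜 g := le_trans (hH ▸ le_RH 𝒜 hh) hQle
      obtain ⟨⟨y, hy⟩, hyne⟩ := AddSubgroup.ne_bot_iff_exists_ne_zero.mp (bot_lt_graded 𝒜 hc h)
      exact degree_eq 𝒜 hy (h1 hy) (by simpa [Subtype.ext_iff] using hyne)
    obtain ⟨h0, hh0⟩ := Set.nonempty_iff_ne_empty.mpr hHne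
    ext z
    simp only [Set.mem_singleton_iff]
    exact ⟨fun hz => this z hz, fun hz => hz ▸ (this h0 hh0 ▸ hh0)⟩
  rw [← hH, hsub, RH_singleton]

lemma forward (hc : Controlled.IsControlled 𝒜) :
    (∀ g : G, Controlled.IsSimpleBimod 𝒜 (𝒜 g)) ∧ Controlled.CentralizerEqCenter 𝒜 := by
  have hsimple : ∀ g : G, Controlled.IsSimpleBimod 𝒜 (𝒜 g) := by
    intro g
    refine ⟨bot_lt_graded 𝒜 hc g, ?_⟩
    intro Q hQle hQsub
    rcases eq_or_ne Q ⊥ with h | h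
    · exact Or.inl h
    · exact Or.inr (sub_of_graded 𝒜 hc hQle hQsub h)
  refine ⟨hsimple, ?_⟩
  -- centralizer condition
  ext x
  simp only [Set.mem_setOf_eq]
  constructor
  · intro hx
    refine ⟨?_, hx⟩
    -- each component of x commutes with 𝒜 0
    have hcomp : ∀ k, ∀ r ∈ 𝒜 0, cmp 𝒜 k x * r = r * cmp 𝒜 k x := by
      intro k r hr
      rw [← cmp_mul_right 𝒜 hr, ← cmp_mul_left 𝒜 hr, hx r hr]
    -- homogeneous commuting elements have degree 0
    have hhomog : ∀ k, ∀ y ∈ 𝒜 k, (∀ r ∈ 𝒜 0, y * r = r * y) → y ≠ 0 → k = 0 := by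
      intro k y hy hcomm hyne
      -- Q = y * 𝒜 0
      set Q : AddSubgroup R :=
        { carrier := {z | ∃ r ∈ 𝒜 0, y * r = z}
          add_mem' := by
            rintro _ _ ⟨r1, hr1, rfl⟩ ⟨r2, hr2, rfl⟩
            exact ⟨r1 + r2, add_mem hr1 hr2, by rw [mul_add]⟩
          zero_mem' := ⟨0, zero_mem _, mul_zero y⟩
          neg_mem' := by
            rintro _ ⟨r, hr, rfl⟩
            exact ⟨-r, neg_mem hr, by rw [mul_neg]⟩ } with hQdef
      have hyQ : y ∈ Q := ⟨1, one_mem_zero 𝒜, mul_one y⟩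
      have hQle : Q ≤ 𝒜 k := by
        rintro _ ⟨r, hr, rfl⟩
        exact mem_mul_zero 𝒜 hr hy
      have hQsub : Controlled.IsSubBimodule 𝒜 Q := by
        rintro a ha _ ⟨r, hr, rfl⟩
        constructor
        · exact ⟨a * r, mem_zero_mul 𝒜 ha hr, by rw [← mul_assoc, hcomm a ha, mul_assoc]⟩
        · exact ⟨r * a, mem_mul_zero 𝒜 ha hr, by rw [mul_assoc]⟩
      have hQne : Q ≠ ⊥ := by
        intro hbot
        rw [hbot] at hyQ
        exact hyne hyQ
      have hQ : Q = 𝒜 k := sub_of_graded 𝒜 hc hQle hQsub hQne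
      -- build a bimodule iso RH {0} ≃ RH {k}
      by_contra hk0
      -- the map r ↦ y * r
      have hmem0 : ∀ z : R, z ∈ Controlled.RH 𝒜 ({0} : Set G) ↔ z ∈ 𝒜 0 := by
        intro z; rw [RH_singleton]
      have hmemk : ∀ z : R, z ∈ Controlled.RH 𝒜 ({k} : Set G) ↔ z ∈ 𝒜 k := by
        intro z; rw [RH_singleton]
      set F : Controlled.RH 𝒜 ({0} : Set G) →+ Controlled.RH 𝒜 ({k} : Set G) :=
        AddMonoidHom.mk' (fun r => ⟨y * (r : R),
          (hmemk _).mpr (mem_mul_zero 𝒜 ((hmem0 _).mp r.2) hy)⟩)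
          (by intro a b; ext; simp [mul_add]) with hF
      have hFinj : Function.Injective F := by
        -- kernel is a sub-bimodule of 𝒜 0
        set K : AddSubgroup R :=
          { carrier := {r | r ∈ 𝒜 0 ∧ y * r = 0}
            add_mem' := by
              rintro r1 r2 ⟨h1, e1⟩ ⟨h2, e2⟩
              exact ⟨add_mem h1 h2, by rw [mul_add, e1, e2, add_zero]⟩
            zero_mem' := ⟨zero_mem _, mul_zero y⟩
            neg_mem' := by
              rintro r ⟨h1, e1⟩
              exact ⟨neg_mem h1, by rw [mul_neg, e1, neg_zero]⟩ } with hKdef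
        have hKle : K ≤ 𝒜 0 := fun r hr => hr.1
        have hKsub : Controlled.IsSubBimodule 𝒜 K := by
          rintro a ha r ⟨h1, e1⟩
          constructor
          · exact ⟨mem_zero_mul 𝒜 ha h1, by rw [← mul_assoc, hcomm a ha, mul_assoc, e1, mul_zero]⟩
          · exact ⟨mem_mul_zero 𝒜 ha h1, by rw [← mul_assoc, e1, zero_mul]⟩
        have hK : K = ⊥ := by
          rcases (hsimple 0).2 K hKle hKsub with hb | ht
          · exact hb
          · exfalso
            have h1K : (1 : R) ∈ K := ht ▸ one_mem_zero 𝒜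
            rw [hKdef] at h1K
            exact hyne (by simpa using h1K.2)
        intro r1 r2 he
        have : ((r1 : R) - r2) ∈ K := by
          refine ⟨sub_mem ((hmem0 _).mp r1.2) ((hmem0 _).mp r2.2), ?_⟩
          have h' := Subtype.ext_iff.mp he
          simp only [hF, AddMonoidHom.mk'_apply] at h'
          rw [mul_sub]
          exact sub_eq_zero_of_eq h'
        rw [hK] at this
        exact Subtype.ext (sub_eq_zero.mp this)
      have hFsurj : Function.Surjective F := by
        intro z
        have hz : (z : R) ∈ 𝒜 k := (hmemk _).mp z.2
        rw [← hQ] at hz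
        obtain ⟨r, hr, he⟩ := hz
        exact ⟨⟨r, (hmem0 _).mpr hr⟩, Subtype.ext he⟩
      have hiso : Nonempty (Controlled.BimodIso 𝒜 (Controlled.RH 𝒜 ({0} : Set G))
          (Controlled.RH 𝒜 ({k} : Set G))) := by
        refine ⟨⟨AddEquiv.ofBijective F ⟨hFinj, hFsurj⟩, ?_, ?_⟩⟩
        · intro a z ha hz haz
          show (F ⟨a * z, haz⟩ : R) = a * (F ⟨z, hz⟩ : R)
          simp only [hF, AddMonoidHom.mk'_apply]
          rw [← mul_assoc, hcomm a ha, mul_assoc]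
        · intro a z ha hz hza
          show (F ⟨z * a, hza⟩ : R) = (F ⟨z, hz⟩ : R) * a
          simp only [hF, AddMonoidHom.mk'_apply]
          rw [mul_assoc]
      have := (hc.2.2.2 {0} {k}).mp hiso
      have : (0 : G) = k := by
        have h0 : (0:G) ∈ ({0} : Set G) := rfl
        rw [this] at h0
        exact h0
      exact hk0 this.symm
    -- conclude x ∈ 𝒜 0
    have hcomps : ∀ k, cmp 𝒜 k x ∈ 𝒜 0 := by
      intro k
      rcases eq_or_ne (cmp 𝒜 k x) 0 with h | h
      · rw [h]; exact zero_mem _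
      · have := hhomog k _ (cmp_mem 𝒜 k x) (hcomp k) h
        rw [← this]
        exact cmp_mem 𝒜 k x
    classical
    have hx_eq := DirectSum.sum_support_decompose 𝒜 x
    rw [← hx_eq]
    exact sum_mem (fun i _ => hcomps i)
  · intro hx
    exact hx.2

end Aux


namespace Aux
variable {G R : Type*} [AddGroup G] [DecidableEq G] [Ring R]
variable (𝒜 : G → AddSubgroup R) [GradedRing 𝒜]

set_option linter.unusedSectionVars false

lemma RH_subbimodule (H : Set G) : Controlled.IsSubBimodule 𝒜 (Controlled.RH 𝒜 H) := by
  intro a ha x hx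
  have : Controlled.RH 𝒜 H = ⨆ h : H, 𝒜 (h : G) := by
    rw [Controlled.RH, iSup_subtype']
  rw [this] at hx ⊢
  refine AddSubgroup.iSup_induction (C := fun z => a * z ∈ (⨆ h : H, 𝒜 (h : G)) ∧
      z * a ∈ (⨆ h : H, 𝒜 (h : G))) _ hx ?_ ?_ ?_
  · intro i y hy
    exact ⟨le_iSup (fun h : H => 𝒜 (h : G)) i (mem_zero_mul 𝒜 ha hy),
      le_iSup (fun h : H => 𝒜 (h : G)) i (mem_mul_zero 𝒜 ha hy)⟩
  · exact ⟨by rw [mul_zero]; exact zero_mem _, by rw [zero_mul]; exact zero_mem _⟩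
  · intro y z hy hz
    rw [mul_add, add_mul]
    exact ⟨add_mem hy.1 hz.1, add_mem hy.2 hz.2⟩

lemma backward_inj (hsimp : ∀ g : G, Controlled.IsSimpleBimod 𝒜 (𝒜 g)) :
    Function.Injective (Controlled.RH 𝒜) := by
  have key : ∀ S T : Set G, Controlled.RH 𝒜 S = Controlled.RH 𝒜 T → S ⊆ T := by
    intro S T h g hg
    obtain ⟨⟨y, hy⟩, hyne⟩ := AddSubgroup.ne_bot_iff_exists_ne_zero.mp (hsimp g).1
    have hyne' : y ≠ 0 := by simpa [Subtype.ext_iff] using hyne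
    have hyT : y ∈ Controlled.RH 𝒜 T := h ▸ le_RH 𝒜 hg hy
    by_contra hgT
    have h0 := cmp_eq_zero_of_RH 𝒜 hyT hgT
    rw [cmp_of_mem_same 𝒜 hy] at h0
    exact hyne' h0
  intro S T h
  exact Set.Subset.antisymm (key S T h) (key T S h.symm)

end Aux


namespace Aux
variable {G R : Type*} [AddGroup G] [DecidableEq G] [Ring R]
variable (𝒜 : G → AddSubgroup R) [GradedRing 𝒜]

set_option linter.unusedSectionVars false
set_option maxHeartbeats 1000000

/-- every sub-bimodule is graded. -/
lemma graded_comps (hstrong : Controlled.IsStronglyGraded 𝒜)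
    (hcent : Controlled.CentralizerEqCenter 𝒜)
    (hsimp : ∀ g : G, Controlled.IsSimpleBimod 𝒜 (𝒜 g))
    {P : AddSubgroup R} (hP : Controlled.IsSubBimodule 𝒜 P) :
    ∀ x ∈ P, ∀ k, cmp 𝒜 k x ∈ P := by
  suffices h : ∀ n : ℕ, ∀ x ∈ P, ∀ F : Finset G, (∀ k ∉ F, cmp 𝒜 k x = 0) →
      F.card ≤ n → ∀ k, cmp 𝒜 k x ∈ P by
    intro x hx k
    classical
    refine h (DFinsupp.support (decompose 𝒜 x)).card x hx _ ?_ le_rfl k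
    intro j hj
    rw [DFinsupp.notMem_support_iff] at hj
    rw [cmp_apply, hj]
    rfl
  intro n
  induction n with
  | zero =>
    intro x hx F hF hcard k
    have hFe : F = ∅ := Finset.card_eq_zero.mp (Nat.le_zero.mp hcard)
    rw [hF k (hFe ▸ Finset.notMem_empty k)]
    exact zero_mem _
  | succ n IH =>
    intro x hx F hF hcard k
    by_cases hcase : ∃ h0 ∈ F, cmp 𝒜 h0 x ∈ P
    · obtain ⟨h0, hh0F, hh0P⟩ := hcase
      set x' := x - cmp 𝒜 h0 x with hx'def
      have hx' : x' ∈ P := sub_mem hx hh0P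
      have hsupp' : ∀ j ∉ F.erase h0, cmp 𝒜 j x' = 0 := by
        intro j hj
        rw [hx'def, map_sub]
        rcases eq_or_ne j h0 with rfl | hne
        · rw [cmp_of_mem_same 𝒜 (cmp_mem 𝒜 j x), sub_self]
        · have hjF : j ∉ F := fun hjF => hj (Finset.mem_erase.mpr ⟨hne, hjF⟩)
          rw [hF j hjF, cmp_of_mem_ne 𝒜 (cmp_mem 𝒜 h0 x) (Ne.symm hne), sub_zero]
      have hcard' : (F.erase h0).card ≤ n := by
        rw [Finset.card_erase_of_mem hh0F]
        omega
      have hcomp' := IH x' hx' (F.erase h0) hsupp' hcard' k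
      have h2 : cmp 𝒜 k (cmp 𝒜 h0 x) ∈ P := by
        rcases eq_or_ne h0 k with rfl | hne
        · rwa [cmp_of_mem_same 𝒜 (cmp_mem 𝒜 h0 x)]
        · rw [cmp_of_mem_ne 𝒜 (cmp_mem 𝒜 h0 x) hne]
          exact zero_mem _
      have h3 := add_mem hcomp' h2
      rwa [hx'def, map_sub, sub_add_cancel] at h3
    · push_neg at hcase
      rcases Finset.eq_empty_or_nonempty F with rfl | hFne
      · rw [hF k (Finset.notMem_empty k)]
        exact zero_mem _
      exfalso
      have hne0 : ∀ j ∈ F, cmp 𝒜 j x ≠ 0 := by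
        intro j hj h0
        exact hcase j hj (h0 ▸ zero_mem P)
      have hcard1 : 1 ≤ F.card := Finset.card_pos.mpr hFne
      rcases eq_or_lt_of_le hcard1 with hcard1' | hcard2
      · -- |F| = 1 : x is homogeneous, contradiction
        obtain ⟨g0, hFg0⟩ := Finset.card_eq_one.mp hcard1'.symm
        have hxeq := eq_sum_cmp 𝒜 x F hF
        rw [hFg0, Finset.sum_singleton] at hxeq
        exact hcase g0 (hFg0 ▸ Finset.mem_singleton_self g0) (hxeq ▸ hx)
      · -- |F| ≥ 2 : build a nonzero bimodule map 𝒜 g0 → 𝒜 h0 and contradict `key`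
        obtain ⟨g0, hg0F, h0, hh0F, hgh⟩ := Finset.one_lt_card.mp hcard2
        -- the D-condition
        set D : R → Prop := fun p => p ∈ P ∧ ∀ j ∉ F, cmp 𝒜 j p = 0 with hD
        have hxD : D x := ⟨hx, hF⟩
        -- well-definedness: the g0-component determines the h0-component
        have WD : ∀ p, D p → cmp 𝒜 g0 p = 0 → cmp 𝒜 h0 p = 0 := by
          intro p hp hpg
          have hsupp' : ∀ j ∉ F.erase g0, cmp 𝒜 j p = 0 := by
            intro j hj
            rcases eq_or_ne j g0 with rfl | hne
            · exact hpg
            · exact hp.2 j (fun hjF => hj (Finset.mem_erase.mpr ⟨hne, hjF⟩))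
          have hcard' : (F.erase g0).card ≤ n := by
            rw [Finset.card_erase_of_mem hg0F]
            omega
          have hph0 : cmp 𝒜 h0 p ∈ P := IH p hp.1 (F.erase g0) hsupp' hcard' h0
          by_contra hne0'
          -- then P ⊓ 𝒜 h0 is a nonzero sub-bimodule of 𝒜 h0
          have hQle : P ⊓ 𝒜 h0 ≤ 𝒜 h0 := inf_le_right
          have hQsub : Controlled.IsSubBimodule 𝒜 (P ⊓ 𝒜 h0) := by
            rintro a ha z ⟨hz1, hz2⟩
            exact ⟨⟨(hP a ha z hz1).1, mem_zero_mul 𝒜 ha hz2⟩,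
              ⟨(hP a ha z hz1).2, mem_mul_zero 𝒜 ha hz2⟩⟩
          rcases (hsimp h0).2 _ hQle hQsub with hb | ht
          · have : cmp 𝒜 h0 p ∈ P ⊓ 𝒜 h0 := ⟨hph0, cmp_mem 𝒜 h0 p⟩
            rw [hb] at this
            exact hne0' this
          · have hmem' : cmp 𝒜 h0 x ∈ P ⊓ 𝒜 h0 := by rw [ht]; exact cmp_mem 𝒜 h0 x
            exact hcase h0 hh0F hmem'.1
        have WD' : ∀ p q, D p → D q → cmp 𝒜 g0 p = cmp 𝒜 g0 q →
            cmp 𝒜 h0 p = cmp 𝒜 h0 q := by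
          intro p q hp hq he
          have hpq : D (p - q) := by
            refine ⟨sub_mem hp.1 hq.1, ?_⟩
            intro j hj
            rw [map_sub, hp.2 j hj, hq.2 j hj, sub_zero]
          have := WD (p - q) hpq (by rw [map_sub, he, sub_self])
          rw [map_sub, sub_eq_zero] at this
          exact this
        -- totality: every element of 𝒜 g0 is the g0-component of some p with D p
        have htot : ∀ y ∈ 𝒜 g0, ∃ p, D p ∧ cmp 𝒜 g0 p = y := by
          set Q' : AddSubgroup R :=
            { carrier := {y | ∃ p, D p ∧ cmp 𝒜 g0 p = y}
              add_mem' := by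
                rintro y1 y2 ⟨p1, hp1, rfl⟩ ⟨p2, hp2, rfl⟩
                refine ⟨p1 + p2, ⟨add_mem hp1.1 hp2.1, ?_⟩, by rw [map_add]⟩
                intro j hj
                rw [map_add, hp1.2 j hj, hp2.2 j hj, add_zero]
              zero_mem' := ⟨0, ⟨zero_mem _, fun j _ => map_zero _⟩, map_zero _⟩
              neg_mem' := by
                rintro y ⟨p, hp, rfl⟩
                refine ⟨-p, ⟨neg_mem hp.1, ?_⟩, by rw [map_neg]⟩
                intro j hj
                rw [map_neg, hp.2 j hj, neg_zero] } with hQ'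
          have hQ'le : Q' ≤ 𝒜 g0 := by
            rintro y ⟨p, hp, rfl⟩
            exact cmp_mem 𝒜 g0 p
          have hQ'sub : Controlled.IsSubBimodule 𝒜 Q' := by
            rintro a ha y ⟨p, hp, rfl⟩
            constructor
            · refine ⟨a * p, ⟨(hP a ha p hp.1).1, ?_⟩, by rw [cmp_mul_left 𝒜 ha]⟩
              intro j hj
              rw [cmp_mul_left 𝒜 ha, hp.2 j hj, mul_zero]
            · refine ⟨p * a, ⟨(hP a ha p hp.1).2, ?_⟩, by rw [cmp_mul_right 𝒜 ha]⟩
              intro j hj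
              rw [cmp_mul_right 𝒜 ha, hp.2 j hj, zero_mul]
          have hQ'ne : Q' ≠ ⊥ := by
            intro hb
            have : cmp 𝒜 g0 x ∈ Q' := ⟨x, hxD, rfl⟩
            rw [hb] at this
            exact hne0 g0 hg0F this
          rcases (hsimp g0).2 Q' hQ'le hQ'sub with hb | ht
          · exact absurd hb hQ'ne
          · intro y hy
            exact (ht ▸ hy : y ∈ Q')
        -- the bimodule map f : 𝒜 g0 → 𝒜 h0
        classical
        set f : R → R := fun y =>
          if hy : ∃ p, D p ∧ cmp 𝒜 g0 p = y then cmp 𝒜 h0 hy.choose else 0 with hfdef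
        have f_spec : ∀ p, D p → f (cmp 𝒜 g0 p) = cmp 𝒜 h0 p := by
          intro p hp
          have hy : ∃ q, D q ∧ cmp 𝒜 g0 q = cmp 𝒜 g0 p := ⟨p, hp, rfl⟩
          rw [hfdef]
          simp only [dif_pos hy]
          exact WD' hy.choose p hy.choose_spec.1 hp hy.choose_spec.2
        refine key 𝒜 hstrong hcent hgh f ?_ ?_ ?_ ?_ ?_
        · intro y hy
          obtain ⟨p, hp, rfl⟩ := htot y hy
          rw [f_spec p hp]
          exact cmp_mem 𝒜 h0 p
        · intro y hy z hz
          obtain ⟨p, hp, rfl⟩ := htot y hy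
          obtain ⟨q, hq, rfl⟩ := htot z hz
          have hpq : D (p + q) := by
            refine ⟨add_mem hp.1 hq.1, ?_⟩
            intro j hj
            rw [map_add, hp.2 j hj, hq.2 j hj, add_zero]
          rw [← map_add, f_spec _ hpq, f_spec _ hp, f_spec _ hq, map_add]
        · intro a ha y hy
          obtain ⟨p, hp, rfl⟩ := htot y hy
          have hap : D (a * p) := by
            refine ⟨(hP a ha p hp.1).1, ?_⟩
            intro j hj
            rw [cmp_mul_left 𝒜 ha, hp.2 j hj, mul_zero]
          rw [← cmp_mul_left 𝒜 ha, f_spec _ hap, f_spec _ hp, cmp_mul_left 𝒜 ha]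
        · intro a ha y hy
          obtain ⟨p, hp, rfl⟩ := htot y hy
          have hap : D (p * a) := by
            refine ⟨(hP a ha p hp.1).2, ?_⟩
            intro j hj
            rw [cmp_mul_right 𝒜 ha, hp.2 j hj, zero_mul]
          rw [← cmp_mul_right 𝒜 ha, f_spec _ hap, f_spec _ hp, cmp_mul_right 𝒜 ha]
        · refine ⟨cmp 𝒜 g0 x, cmp_mem 𝒜 g0 x, ?_⟩
          rw [f_spec x hxD]
          exact hne0 h0 hh0F

lemma backward_surj (hstrong : Controlled.IsStronglyGraded 𝒜)
    (hcent : Controlled.CentralizerEqCenter 𝒜)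
    (hsimp : ∀ g : G, Controlled.IsSimpleBimod 𝒜 (𝒜 g))
    (P : AddSubgroup R) (hP : Controlled.IsSubBimodule 𝒜 P) :
    ∃ H : Set G, Controlled.RH 𝒜 H = P := by
  refine ⟨{g : G | 𝒜 g ≤ P}, le_antisymm (RH_le 𝒜 fun h hh => hh) ?_⟩
  intro x hx
  classical
  rw [← DirectSum.sum_support_decompose 𝒜 x]
  refine sum_mem ?_
  intro i _
  show cmp 𝒜 i x ∈ Controlled.RH 𝒜 {g : G | 𝒜 g ≤ P}
  rcases eq_or_ne (cmp 𝒜 i x) 0 with h0 | h0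
  · rw [h0]; exact zero_mem _
  · have hiP : 𝒜 i ≤ P := by
      have hQle : P ⊓ 𝒜 i ≤ 𝒜 i := inf_le_right
      have hQsub : Controlled.IsSubBimodule 𝒜 (P ⊓ 𝒜 i) := by
        rintro a ha z ⟨hz1, hz2⟩
        exact ⟨⟨(hP a ha z hz1).1, mem_zero_mul 𝒜 ha hz2⟩,
          ⟨(hP a ha z hz1).2, mem_mul_zero 𝒜 ha hz2⟩⟩
      rcases (hsimp i).2 _ hQle hQsub with hb | ht
      · exfalso
        have : cmp 𝒜 i x ∈ P ⊓ 𝒜 i :=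
          ⟨graded_comps 𝒜 hstrong hcent hsimp hP x hx i, cmp_mem 𝒜 i x⟩
        rw [hb] at this
        exact h0 this
      · intro z hz
        have hz' : z ∈ P ⊓ 𝒜 i := by rw [ht]; exact hz
        exact hz'.1
    exact le_RH 𝒜 hiP (cmp_mem 𝒜 i x)

end Aux


namespace Aux
variable {G R : Type*} [AddGroup G] [DecidableEq G] [Ring R]
variable (𝒜 : G → AddSubgroup R) [GradedRing 𝒜]

set_option linter.unusedSectionVars false
set_option maxHeartbeats 1000000

/-- symmetrize a bimodule iso. -/
noncomputable def BimodIso.symm' {P Q : AddSubgroup R}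
    (hP : Controlled.IsSubBimodule 𝒜 P) (Φ : Controlled.BimodIso 𝒜 P Q) :
    Controlled.BimodIso 𝒜 Q P where
  toEquiv := Φ.toEquiv.symm
  map_left := by
    intro a x ha hx hax
    set w := Φ.toEquiv.symm ⟨x, hx⟩ with hw
    have haw : a * (w : R) ∈ P := (hP a ha _ w.2).1
    have h1 : Φ.toEquiv ⟨a * (w : R), haw⟩ = ⟨a * x, hax⟩ := by
      refine Subtype.ext ?_
      have h2 := Φ.map_left a (w : R) ha w.2 haw
      rw [h2]
      have h3 : Φ.toEquiv ⟨(w : R), w.2⟩ = ⟨x, hx⟩ := by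
        rw [hw]
        convert Φ.toEquiv.apply_symm_apply ⟨x, hx⟩
      rw [h3]
    have := congrArg Φ.toEquiv.symm h1
    rw [AddEquiv.symm_apply_apply] at this
    rw [← this]
  map_right := by
    intro a x ha hx hxa
    set w := Φ.toEquiv.symm ⟨x, hx⟩ with hw
    have haw : (w : R) * a ∈ P := (hP a ha _ w.2).2
    have h1 : Φ.toEquiv ⟨(w : R) * a, haw⟩ = ⟨x * a, hxa⟩ := by
      refine Subtype.ext ?_
      have h2 := Φ.map_right a (w : R) ha w.2 haw
      rw [h2]
      have h3 : Φ.toEquiv ⟨(w : R), w.2⟩ = ⟨x, hx⟩ := by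
        rw [hw]
        convert Φ.toEquiv.apply_symm_apply ⟨x, hx⟩
      rw [h3]
    have := congrArg Φ.toEquiv.symm h1
    rw [AddEquiv.symm_apply_apply] at this
    rw [← this]

lemma iso_subset (hstrong : Controlled.IsStronglyGraded 𝒜)
    (hcent : Controlled.CentralizerEqCenter 𝒜)
    (hsimp : ∀ g : G, Controlled.IsSimpleBimod 𝒜 (𝒜 g))
    (S T : Set G) (Φ : Controlled.BimodIso 𝒜 (Controlled.RH 𝒜 S) (Controlled.RH 𝒜 T)) :
    S ⊆ T := by
  intro g hg
  obtain ⟨⟨y, hy⟩, hyne⟩ := AddSubgroup.ne_bot_iff_exists_ne_zero.mp (hsimp g).1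
  have hyne' : y ≠ 0 := by simpa [Subtype.ext_iff] using hyne
  have hle : 𝒜 g ≤ Controlled.RH 𝒜 S := le_RH 𝒜 hg
  set z : R := (Φ.toEquiv ⟨y, hle hy⟩ : R) with hz
  have hzT : z ∈ Controlled.RH 𝒜 T := (Φ.toEquiv ⟨y, hle hy⟩).2
  have hzne : z ≠ 0 := by
    intro h0
    have : Φ.toEquiv ⟨y, hle hy⟩ = 0 := Subtype.ext h0
    have := congrArg Φ.toEquiv.symm this
    rw [AddEquiv.symm_apply_apply, map_zero] at this
    exact hyne' (by simpa [Subtype.ext_iff] using this)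
  obtain ⟨t, ht⟩ : ∃ t, cmp 𝒜 t z ≠ 0 := by
    by_contra hc
    push_neg at hc
    exact hzne (eq_zero_of_cmp 𝒜 z hc)
  have htT : t ∈ T := by
    by_contra htT
    exact ht (cmp_eq_zero_of_RH 𝒜 hzT htT)
  by_contra hgT
  have hgt : g ≠ t := fun h => hgT (h ▸ htT)
  classical
  set f : R → R := fun y' =>
    if hy' : y' ∈ 𝒜 g then cmp 𝒜 t ((Φ.toEquiv ⟨y', hle hy'⟩ : R)) else 0 with hfdef
  refine key 𝒜 hstrong hcent hgt f ?_ ?_ ?_ ?_ ?_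
  · intro y' hy'
    rw [hfdef]
    simp only [dif_pos hy']
    exact cmp_mem 𝒜 t _
  · intro y1 hy1 y2 hy2
    rw [hfdef]
    simp only [dif_pos hy1, dif_pos hy2, dif_pos (add_mem hy1 hy2)]
    have : (⟨y1 + y2, hle (add_mem hy1 hy2)⟩ : Controlled.RH 𝒜 S) =
        ⟨y1, hle hy1⟩ + ⟨y2, hle hy2⟩ := Subtype.ext rfl
    rw [this, map_add]
    push_cast
    rw [map_add]
  · intro a ha y' hy'
    have hay' : a * y' ∈ 𝒜 g := mem_zero_mul 𝒜 ha hy'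
    rw [hfdef]
    simp only [dif_pos hy', dif_pos hay']
    rw [Φ.map_left a y' ha (hle hy') (hle hay'), cmp_mul_left 𝒜 ha]
  · intro a ha y' hy'
    have hay' : y' * a ∈ 𝒜 g := mem_mul_zero 𝒜 ha hy'
    rw [hfdef]
    simp only [dif_pos hy', dif_pos hay']
    rw [Φ.map_right a y' ha (hle hy') (hle hay'), cmp_mul_right 𝒜 ha]
  · refine ⟨y, hy, ?_⟩
    rw [hfdef]
    simp only [dif_pos hy]
    exact ht

lemma backward_iso (hstrong : Controlled.IsStronglyGraded 𝒜)
    (hcent : Controlled.CentralizerEqCenter 𝒜)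
    (hsimp : ∀ g : G, Controlled.IsSimpleBimod 𝒜 (𝒜 g)) (S T : Set G) :
    Nonempty (Controlled.BimodIso 𝒜 (Controlled.RH 𝒜 S) (Controlled.RH 𝒜 T)) ↔ S = T := by
  constructor
  · rintro ⟨Φ⟩
    refine Set.Subset.antisymm (iso_subset 𝒜 hstrong hcent hsimp S T Φ) ?_
    exact iso_subset 𝒜 hstrong hcent hsimp T S (BimodIso.symm' 𝒜 (RH_subbimodule 𝒜 S) Φ)
  · rintro rfl
    exact ⟨⟨AddEquiv.refl _, fun a x ha hx hax => rfl, fun a x ha hx hxa => rfl⟩⟩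

end Aux

/-- A strongly `G`-graded ring `R` is `G`-controlled iff every `R_g`
is a simple `R_e`-bimodule and `C_R(R_e) = Z(R_e)`. -/
theorem stmt15 (𝒜 : G → AddSubgroup R) [GradedRing 𝒜]
    (hstrong : Controlled.IsStronglyGraded 𝒜) :
    Controlled.IsControlled 𝒜 ↔
      ((∀ g : G, Controlled.IsSimpleBimod 𝒜 (𝒜 g)) ∧
        Controlled.CentralizerEqCenter 𝒜) := by
  constructor
  · exact fun hc => Aux.forward 𝒜 hc
  · rintro ⟨hsimp, hcent⟩
    exact ⟨fun H => Aux.RH_subbimodule 𝒜 H, Aux.backward_inj 𝒜 hsimp,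
      Aux.backward_surj 𝒜 hstrong hcent hsimp,
      Aux.backward_iso 𝒜 hstrong hcent hsimp⟩
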